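/- Let E be a finite directed graph and let cl : ℤ^{E⁰} → BF_gr(E) be the composite of the canonical inclusion ℤ^{E⁰} → ℤ[σ,σ⁻¹]^{E⁰} with the projection onto BF_gr(E) = coker(I − σA_E^t). Then ker(cl) ∩ ℕ^{E⁰} = 0; in other words, no nonzero linear combination of vertices with nonnegative integer coefficients maps to zero in BF_gr(E). -/

import Mathlib

open LaurentPolynomial

instance : CoeFun (LaurentPolynomial ℤ) (fun _ => ℤ → ℤ) := ⟨fun p => p.coeff⟩

private noncomputable def coeffHom (n : ℤ) : LaurentPolynomial ℤ →+ ℤ :=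
  (Finsupp.applyAddHom n).comp AddMonoidAlgebra.coeffAddEquiv.toAddMonoidHom

private lemma coeffHom_apply (p : LaurentPolynomial ℤ) (n : ℤ) : coeffHom n p = p n := rfl

private lemma coeffHom_T_mul (p : LaurentPolynomial ℤ) (n : ℤ) :
    coeffHom n (LaurentPolynomial.T 1 * p) = coeffHom (n - 1) p := by
  rw [coeffHom_apply, coeffHom_apply,
    show (T 1 : LaurentPolynomial ℤ) = AddMonoidAlgebra.single 1 1 from rfl,
    AddMonoidAlgebra.coeff_single_mul_apply]
  simp [sub_eq_neg_add]

private lemma coeffHom_natCast_mul (c : ℕ) (p : LaurentPolynomial ℤ) (n : ℤ) :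
    coeffHom n ((c : LaurentPolynomial ℤ) * p) = c * coeffHom n p := by
  rw [coeffHom_apply, coeffHom_apply,
    show ((c : LaurentPolynomial ℤ)) = AddMonoidAlgebra.single 0 (c:ℤ) by
      rw [AddMonoidAlgebra.natCast_def],
    AddMonoidAlgebra.coeff_single_mul_apply]
  simp

private lemma coeffHom_natCast (c : ℕ) (n : ℤ) :
    coeffHom n ((c : LaurentPolynomial ℤ)) = if n = 0 then (c : ℤ) else 0 := by
  rw [coeffHom_apply, AddMonoidAlgebra.natCast_def, AddMonoidAlgebra.coeff_single, Finsupp.single_apply]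
  simp [eq_comm]

/-- Let `E` be a finite directed graph and `cl : ℤ^{E⁰} → BF_gr(E)` the
composite of the inclusion `ℤ^{E⁰} → ℤ[σ,σ⁻¹]^{E⁰}` with the projection onto
`BF_gr(E) = coker(I - σ·A_E^t)`.  Then `ker(cl) ∩ ℕ^{E⁰} = 0`: no nonzero
nonnegative-integer combination of vertices maps to zero in `BF_gr(E)`. -/
theorem stmt_2 {V Ed : Type} [Fintype V] [Fintype Ed] [DecidableEq V]
    (s r : Ed → V) :
    ∀ x : V → ℕ,
      (Submodule.Quotient.mk
          (p := LinearMap.range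
            (Matrix.mulVecLin
              ((Matrix.of (fun (v : V) (w : {v : V // ∃ e, s e = v}) =>
                (if v = (w : V) then 1 else 0)
                  - LaurentPolynomial.T 1 *
                    (Fintype.card {e : Ed // s e = (w : V) ∧ r e = v} : LaurentPolynomial ℤ))) :
                Matrix V {v : V // ∃ e, s e = v} (LaurentPolynomial ℤ))))
          (fun v : V => (x v : LaurentPolynomial ℤ)) = 0) → x = 0 := by
  intro x h
  rw [Submodule.Quotient.mk_eq_zero, LinearMap.mem_range] at h
  obtain ⟨y, hy⟩ := h
  -- the coefficient-wise equations
  have key : ∀ (v : V) (n : ℤ),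
      (∑ w : {v : V // ∃ e, s e = v}, (if v = (w:V) then (y w) n else 0))
        - ∑ w : {v : V // ∃ e, s e = v},
            (Fintype.card {e : Ed // s e = (w : V) ∧ r e = v} : ℤ) * (y w) (n-1)
      = if n = 0 then (x v : ℤ) else 0 := by
    intro v n
    have h1 := congrFun hy v
    simp only [Matrix.mulVecLin_apply, Matrix.mulVec, dotProduct, Matrix.of_apply] at h1
    have h2 := congrArg (coeffHom n) h1
    rw [map_sum, coeffHom_natCast] at h2
    rw [← h2, ← Finset.sum_sub_distrib]
    apply Finset.sum_congr rfl
    intro w _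
    rw [sub_mul, (coeffHom n).map_sub, mul_assoc (LaurentPolynomial.T 1), coeffHom_T_mul,
      coeffHom_natCast_mul, coeffHom_apply]
    congr 1
    split
    · rw [one_mul]
    · rw [zero_mul]; rfl
  -- reduce the "identity" sum
  have sum_ite : ∀ (v : V) (g : {v : V // ∃ e, s e = v} → ℤ),
      (∑ w : {v : V // ∃ e, s e = v}, if v = (w:V) then g w else 0)
        = if h : ∃ e, s e = v then g ⟨v, h⟩ else 0 := by
    intro v g
    by_cases h : ∃ e, s e = v
    · rw [dif_pos h, Finset.sum_eq_single ⟨v, h⟩]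
      · rw [if_pos rfl]
      · rintro w _ hw
        rw [if_neg]
        rintro rfl
        exact hw (Subtype.ext rfl)
      · intro hmem; exact absurd (Finset.mem_univ _) hmem
    · rw [dif_neg h, Finset.sum_eq_zero]
      intro w _
      rw [if_neg]
      rintro rfl
      exact h w.2
  -- recursion for regular vertices
  have E1 : ∀ (w₀ : {v : V // ∃ e, s e = v}) (n : ℤ),
      (y w₀) n = (if n = 0 then (x (w₀ : V) : ℤ) else 0)
        + ∑ w : {v : V // ∃ e, s e = v},
            (Fintype.card {e : Ed // s e = (w : V) ∧ r e = (w₀ : V)} : ℤ) * (y w) (n-1) := by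
    intro w₀ n
    have hkey := key (w₀ : V) n
    rw [sum_ite, dif_pos w₀.2] at hkey
    have heta : (⟨(w₀ : V), w₀.2⟩ : {v : V // ∃ e, s e = v}) = w₀ := Subtype.ext rfl
    rw [heta] at hkey
    linarith
  -- support bounds
  obtain ⟨Mu, hMu⟩ := Finset.exists_le
    ((Finset.univ : Finset {v : V // ∃ e, s e = v}).biUnion fun w => Finsupp.support (y w).coeff)
  obtain ⟨Ml, hMl⟩ := Finset.exists_le
    (((Finset.univ : Finset {v : V // ∃ e, s e = v}).biUnion fun w => Finsupp.support (y w).coeff).image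
      (fun n => -n))
  have hb : ∀ n : ℤ, n < -Ml → ∀ w, (y w) n = 0 := by
    intro n hn w
    by_contra hz
    have hmem : n ∈ (Finset.univ : Finset {v : V // ∃ e, s e = v}).biUnion
        (fun w => Finsupp.support (y w).coeff) :=
      Finset.mem_biUnion.mpr ⟨w, Finset.mem_univ _, Finsupp.mem_support_iff.mpr hz⟩
    have := hMl (-n) (Finset.mem_image.mpr ⟨n, hmem, rfl⟩)
    omega
  have hN : ∀ n : ℤ, max Mu 0 < n → ∀ w, (y w) n = 0 := by
    intro n hn w
    by_contra hz
    have hmem : n ∈ (Finset.univ : Finset {v : V // ∃ e, s e = v}).biUnion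
        (fun w => Finsupp.support (y w).coeff) :=
      Finset.mem_biUnion.mpr ⟨w, Finset.mem_univ _, Finsupp.mem_support_iff.mpr hz⟩
    have := hMu n hmem
    omega
  set b : ℤ := -Ml with hbdef
  set N : ℤ := max Mu 0 with hNdef
  -- upward induction: all coefficients are nonnegative (and vanish in negative degrees)
  have step : ∀ n : ℤ, ((∀ w, 0 ≤ (y w) (n-1)) ∧ (n - 1 < 0 → ∀ w, (y w) (n-1) = 0)) →
      ((∀ w, 0 ≤ (y w) n) ∧ (n < 0 → ∀ w, (y w) n = 0)) := by
    intro n hprev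
    obtain ⟨h1, h2⟩ := hprev
    constructor
    · intro w
      rw [E1 w n]
      apply add_nonneg
      · split <;> positivity
      · exact Finset.sum_nonneg fun w' _ => mul_nonneg (by positivity) (h1 w')
    · intro hn w
      rw [E1 w n, if_neg (by omega), zero_add, Finset.sum_eq_zero]
      intro w' _
      rw [h2 (by omega) w', mul_zero]
  have triv : ∀ n : ℤ, n < b → ((∀ w, 0 ≤ (y w) n) ∧ (n < 0 → ∀ w, (y w) n = 0)) :=
    fun n hn => ⟨fun w => le_of_eq (hb n hn w).symm, fun _ w => hb n hn w⟩
  have pos : ∀ n : ℤ, (∀ w, 0 ≤ (y w) n) ∧ (n < 0 → ∀ w, (y w) n = 0) := by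
    have auxk : ∀ k : ℕ, (∀ w, 0 ≤ (y w) (b + (k:ℤ))) ∧
        ((b + (k:ℤ)) < 0 → ∀ w, (y w) (b + (k:ℤ)) = 0) := by
      intro k
      induction k with
      | zero =>
        have := step b (triv (b - 1) (by omega))
        simpa using this
      | succ k ih =>
        have hcast : (b + ((k:ℤ)+1)) - 1 = b + (k:ℤ) := by ring
        have := step (b + ((k:ℤ)+1)) (by rw [hcast]; exact ih)
        push_cast
        exact this
    intro n
    rcases lt_or_ge n b with hn | hn
    · exact triv n hn
    · have hnat : n = b + (((n - b).toNat : ℕ) : ℤ) := by omega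
      rw [hnat]
      exact auxk _
  -- downward induction: coefficients vanish in all degrees ≥ 0
  have down : ∀ k : ℕ, (0 ≤ N + 1 - (k:ℤ)) → ∀ w, (y w) (N + 1 - (k:ℤ)) = 0 := by
    intro k
    induction k with
    | zero =>
      intro _ w
      exact hN (N + 1 - ((0:ℕ):ℤ)) (by push_cast; omega) w
    | succ k ih =>
      intro hk w
      have hk' : (0:ℤ) ≤ N + 1 - (k:ℤ) := by push_cast at hk; omega
      have hn1 : (1:ℤ) ≤ N + 1 - (k:ℤ) := by push_cast at hk; omega
      have hzero := ih hk'
      -- from key at every vertex v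
      have hv : ∀ v : V, ∑ w : {v : V // ∃ e, s e = v},
          (Fintype.card {e : Ed // s e = (w : V) ∧ r e = v} : ℤ)
            * (y w) (N + 1 - (k:ℤ) - 1) = 0 := by
        intro v
        have hk2 := key v (N + 1 - (k:ℤ))
        rw [if_neg (by omega)] at hk2
        have hJ : (∑ w : {v : V // ∃ e, s e = v},
            if v = (w:V) then (y w) (N + 1 - (k:ℤ)) else 0) = 0 :=
          Finset.sum_eq_zero (fun w _ => by rw [hzero w, ite_self])
        linarith
      -- sum the relations over all v and use nonnegativity
      have htot : ∑ w : {v : V // ∃ e, s e = v},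
          (∑ v : V, (Fintype.card {e : Ed // s e = (w : V) ∧ r e = v} : ℤ))
            * (y w) (N + 1 - (k:ℤ) - 1) = 0 := by
        calc ∑ w : {v : V // ∃ e, s e = v},
              (∑ v : V, (Fintype.card {e : Ed // s e = (w : V) ∧ r e = v} : ℤ))
                * (y w) (N + 1 - (k:ℤ) - 1)
            = ∑ w : {v : V // ∃ e, s e = v}, ∑ v : V,
                (Fintype.card {e : Ed // s e = (w : V) ∧ r e = v} : ℤ)
                  * (y w) (N + 1 - (k:ℤ) - 1) := by
              exact Finset.sum_congr rfl fun w _ => Finset.sum_mul _ _ _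
          _ = ∑ v : V, ∑ w : {v : V // ∃ e, s e = v},
                (Fintype.card {e : Ed // s e = (w : V) ∧ r e = v} : ℤ)
                  * (y w) (N + 1 - (k:ℤ) - 1) := Finset.sum_comm
          _ = 0 := Finset.sum_eq_zero fun v _ => hv v
      have hterm := (Finset.sum_eq_zero_iff_of_nonneg
        (fun w' _ => mul_nonneg
          (Finset.sum_nonneg fun v _ => by positivity)
          ((pos (N + 1 - (k:ℤ) - 1)).1 w'))).mp htot w (Finset.mem_univ w)
      obtain ⟨e, he⟩ := w.2
      have hcardpos : 0 < Fintype.card {e' : Ed // s e' = (w : V) ∧ r e' = r e} :=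
        Fintype.card_pos_iff.mpr ⟨⟨e, he, rfl⟩⟩
      have hle : (Fintype.card {e' : Ed // s e' = (w : V) ∧ r e' = r e} : ℤ)
          ≤ ∑ v : V, (Fintype.card {e : Ed // s e = (w : V) ∧ r e = v} : ℤ) :=
        Finset.single_le_sum (f := fun v : V => (Fintype.card {e : Ed // s e = (w : V) ∧ r e = v} : ℤ))
          (fun v _ => by positivity) (Finset.mem_univ (r e))
      have hfpos : 0 < ∑ v : V, (Fintype.card {e : Ed // s e = (w : V) ∧ r e = v} : ℤ) := by
        have : (0:ℤ) < (Fintype.card {e' : Ed // s e' = (w : V) ∧ r e' = r e} : ℤ) := by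
          exact_mod_cast hcardpos
        omega
      have hyz : (y w) (N + 1 - (k:ℤ) - 1) = 0 := by
        rcases mul_eq_zero.mp hterm with h' | h'
        · omega
        · exact h'
      have hidx : N + 1 - (((k+1:ℕ)):ℤ) = N + 1 - (k:ℤ) - 1 := by push_cast; ring
      rw [hidx]
      exact hyz
  -- conclude
  have hNnonneg : 0 ≤ N := le_max_right _ _
  have hY0 : ∀ w, (y w) 0 = 0 := by
    intro w
    have h0 := down (N+1).toNat (by omega) w
    have hidx : N + 1 - (((N+1).toNat : ℕ) : ℤ) = 0 := by omega
    rwa [hidx] at h0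
  have hYm1 : ∀ w, (y w) (-1) = 0 := (pos (-1)).2 (by norm_num)
  funext v
  have hk0 := key v 0
  rw [if_pos rfl] at hk0
  have hJ : (∑ w : {v : V // ∃ e, s e = v}, if v = (w:V) then (y w) 0 else 0) = 0 :=
    Finset.sum_eq_zero (fun w _ => by rw [hY0 w, ite_self])
  have hS : (∑ w : {v : V // ∃ e, s e = v},
      (Fintype.card {e : Ed // s e = (w : V) ∧ r e = v} : ℤ) * (y w) ((0:ℤ)-1)) = 0 :=
    Finset.sum_eq_zero (fun w _ => by
      rw [show (0:ℤ)-1 = -1 by ring, hYm1 w, mul_zero])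
  have : (x v : ℤ) = 0 := by rw [← hk0, hJ, hS, sub_zero]
  exact_mod_cast this
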